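/- For all indices with 1 ≤ j < k ≤ i ≤ d one has (a_i^{(k)})^* a_j^{(j)} = 0. -/
import Mathlib

/-- Helper: if `star x * t = 0` and `T ≥ 0` with `T² = ∑ μ^(2n) tⁿ⁺¹ (tⁿ⁺¹)*`,
then `T * x = 0`. -/
lemma Tmul_eq_zero_of {A : Type*} [CStarAlgebra A] [PartialOrder A] [StarOrderedRing A]
    {μ : ℝ} {t T x : A} (hT : 0 ≤ T)
    (hTsq : HasSum (fun n : ℕ => μ ^ (2 * n) • (t ^ (n + 1) * star (t ^ (n + 1)))) (T ^ 2))
    (hx : star x * t = 0) : T * x = 0 := by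
  have hsa : star T = T := (IsSelfAdjoint.of_nonneg hT).star_eq
  have h := hTsq.mul_left (star x)
  have hz : (fun n : ℕ => star x * (μ ^ (2 * n) • (t ^ (n + 1) * star (t ^ (n + 1)))))
      = fun _ => (0 : A) := by
    funext n
    rw [mul_smul_comm, pow_succ' t n, ← mul_assoc, ← mul_assoc, hx, zero_mul, zero_mul,
      smul_zero]
  rw [hz] at h
  have hsum0 : star x * T ^ 2 = 0 := (h.unique hasSum_zero)
  have h2 : star (T * x) * (T * x) = star x * T ^ 2 * x := by
    rw [star_mul, hsa, sq]
    simp [mul_assoc]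
  rw [hsum0, zero_mul] at h2
  exact CStarRing.star_mul_self_eq_zero_iff _ |>.mp h2

/-- For `1 ≤ j < k ≤ i ≤ d`, `(aᵢ⁽ᵏ⁾)* aⱼ⁽ʲ⁾ = 0`. -/
theorem a_star_a_zero {A : Type*} [CStarAlgebra A] [PartialOrder A] [StarOrderedRing A]
    {d : ℕ} (hd : 0 < d) {μ : ℝ} (hμ₁ : -1 < μ) (hμ₂ : μ < 1)
    (t T P : ℕ → A) (a : ℕ → ℕ → A)
    (rel1 : ∀ i j, 1 ≤ i → i ≤ d → 1 ≤ j → j ≤ d → i ≠ j → star (t i) * t j = 0)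
    (rel2 : ∀ i, 1 ≤ i → i ≤ d →
      star (t i) * t i = 1 - ∑ k ∈ Finset.Ico 1 i, t k * star (t k))
    (rel3 : ∀ i j, 1 ≤ i → i < j → j ≤ d → t j * t i = 0)
    (hP : ∀ j, P j = 1 - ∑ k ∈ Finset.Icc 1 j, t k * star (t k))
    (hTpos : ∀ i, 1 ≤ i → i ≤ d → 0 ≤ T i)
    (hTsq : ∀ i, 1 ≤ i → i ≤ d →
      HasSum (fun n : ℕ => μ ^ (2 * n) • ((t i) ^ (n + 1) * star ((t i) ^ (n + 1))))
        (T i ^ 2))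
    (haii : ∀ i, 1 ≤ i → i ≤ d → a i i = T i * t i)
    (haij : ∀ i j, 1 ≤ j → j < i → i ≤ d →
      HasSum (fun n : ℕ => μ ^ n • ((t j) ^ n * a i (j + 1) * star ((t j) ^ n)))
        (a i j)) :
    ∀ i j k, 1 ≤ j → j < k → k ≤ i → i ≤ d → star (a i k) * a j j = 0 := by
  -- Key lemma: for `1 ≤ j < k ≤ i ≤ d`, `star (t j) * a i k = 0`.
  have key : ∀ n i k, i - k = n → k ≤ i → i ≤ d →
      ∀ j, 1 ≤ j → j < k → star (t j) * a i k = 0 := by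
    intro n
    induction n with
    | zero =>
      intro i k hn hki hid j hj hjk
      have hki' : k = i := le_antisymm hki (by omega)
      subst hki'
      have hk1 : 1 ≤ k := by omega
      have hjd : j ≤ d := by omega
      have hjk' : star (t j) * t k = 0 := rel1 j k hj hjd hk1 hid (by omega)
      have hTk : T k * t j = 0 :=
        Tmul_eq_zero_of (hTpos k hk1 hid) (hTsq k hk1 hid) hjk'
      have hTsa : star (T k) = T k := (IsSelfAdjoint.of_nonneg (hTpos k hk1 hid)).star_eq
      have h2 : star (t j) * T k = 0 := by
        have := congrArg star hTk
        rwa [star_mul, hTsa, star_zero] at this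
      rw [haii k hk1 hid, ← mul_assoc, h2, zero_mul]
    | succ n ih =>
      intro i k hn hki hid j hj hjk
      have hki' : k < i := by omega
      have hk1 : 1 ≤ k := by omega
      have hjd : j ≤ d := by omega
      have h := (haij i k hk1 hki' hid).mul_left (star (t j))
      have hz : (fun m : ℕ => star (t j) * (μ ^ m • ((t k) ^ m * a i (k + 1) * star ((t k) ^ m))))
          = fun _ => (0 : A) := by
        funext m
        match m with
        | 0 =>
          have hIH : star (t j) * a i (k + 1) = 0 :=
            ih i (k + 1) (by omega) (by omega) hid j hj (by omega)
          simp [hIH]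
        | m + 1 =>
          have hjk' : star (t j) * t k = 0 :=
            rel1 j k hj hjd hk1 (by omega) (by omega)
          rw [mul_smul_comm, pow_succ' (t k) m, ← mul_assoc, ← mul_assoc, ← mul_assoc,
            hjk', zero_mul, zero_mul, zero_mul, smul_zero]
      rw [hz] at h
      exact (h.unique hasSum_zero).symm ▸ (hasSum_zero.unique h).symm
  intro i j k hj hjk hki hid
  have hj1 : 1 ≤ j := hj
  have hjd : j ≤ d := by omega
  have hkey : star (t j) * a i k = 0 := key (i - k) i k rfl hki hid j hj hjk
  have hx : star (a i k) * t j = 0 := by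
    have := congrArg star hkey
    rwa [star_mul, star_star, star_zero] at this
  have hTj : T j * a i k = 0 :=
    Tmul_eq_zero_of (hTpos j hj1 hjd) (hTsq j hj1 hjd) hx
  have hTsa : star (T j) = T j := (IsSelfAdjoint.of_nonneg (hTpos j hj1 hjd)).star_eq
  have h2 : star (a i k) * T j = 0 := by
    have := congrArg star hTj
    rwa [star_mul, hTsa, star_zero] at this
  rw [haii j hj1 hjd, ← mul_assoc, h2, zero_mul]
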